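/- Octahedral Tucker lemma: let n, m ≥ 1, let V be the set of nonzero vectors x ∈ {−1, 0, +1}^n, and for x, y ∈ V write x ⪯ y if every nonzero coordinate of x agrees with the corresponding coordinate of y (i.e. x_i ≠ 0 implies y_i = x_i). Suppose λ : V → {±1, ±2, …, ±m} satisfies λ(−x) = −λ(x) for all x ∈ V, and λ(x) + λ(y) ≠ 0 for all x, y ∈ V with x ⪯ y. Then n ≤ m. -/

import Mathlib

namespace OctTucker

open List Finset

attribute [local instance] Classical.propDecidable

/-- alternating sign sequence starting with sign `b` (`true` = positive). -/
def altB : Bool → List ℤ → Bool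
  | _, [] => true
  | b, x :: xs => (decide (0 < x) == b) && altB (!b) xs

/-- strict comparison by absolute value -/
def rAbs (a b : ℤ) : Prop := |a| < |b|

instance : IsTrans ℤ rAbs := ⟨fun _ _ _ => lt_trans⟩
instance : IsAntisymm ℤ rAbs := ⟨fun a b h h' => absurd (lt_trans h h') (lt_irrefl _)⟩

/-- a multiset of labels is `b`-alternating -/
def Good (b : Bool) (M : Multiset ℤ) : Prop :=
  ∃ l : List ℤ, (l : Multiset ℤ) = M ∧ l.Chain' rAbs ∧ altB b l = true

lemma good_coe_iff {b : Bool} {l : List ℤ} (h : l.Chain' rAbs) :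
    Good b (l : Multiset ℤ) ↔ altB b l = true := by
  constructor
  · rintro ⟨l', hl', hc', ha'⟩
    have hperm : l' ~ l := Multiset.coe_eq_coe.mp hl'
    have : l' = l := List.Perm.eq_of_pairwise (fun _ _ _ _ h h' => absurd (lt_trans h h') (lt_irrefl _))
      (List.isChain_iff_pairwise.mp hc') (List.isChain_iff_pairwise.mp h) hperm
    rwa [this] at ha'
  · intro ha; exact ⟨l, rfl, h, ha⟩

lemma Good.nodup_abs {b : Bool} {M : Multiset ℤ} (h : Good b M) :
    (M.map (fun a => |a|)).Nodup := by
  obtain ⟨l, rfl, hc, -⟩ := h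
  have hp : l.Pairwise rAbs := List.isChain_iff_pairwise.mp hc
  have : (l.map (fun a => |a|)).Pairwise (· < ·) := (List.pairwise_map).mpr hp
  have hn : (l.map (fun a => |a|)).Nodup := this.imp (fun hlt => ne_of_lt hlt)
  simpa using hn

lemma not_altB_both {b : Bool} {x : ℤ} {xs : List ℤ} :
    ¬(altB b (x :: xs) = true ∧ altB (!b) (x :: xs) = true) := by
  rintro ⟨h1, h2⟩
  simp only [altB, Bool.and_eq_true, beq_iff_eq] at h1 h2
  rw [h1.1] at h2
  exact (Bool.not_ne_self b) h2.1.symm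

lemma not_good_both {M : Multiset ℤ} (hM : M ≠ 0) :
    ¬(Good true M ∧ Good false M) := by
  rintro ⟨⟨l₁, hl₁, hc₁, ha₁⟩, ⟨l₂, hl₂, hc₂, ha₂⟩⟩
  have hperm : l₁ ~ l₂ := Multiset.coe_eq_coe.mp (hl₁.trans hl₂.symm)
  have : l₁ = l₂ := List.Perm.eq_of_pairwise (fun _ _ _ _ h h' => absurd (lt_trans h h') (lt_irrefl _))
    (List.isChain_iff_pairwise.mp hc₁) (List.isChain_iff_pairwise.mp hc₂) hperm
  subst this
  cases l₁ with
  | nil => exact hM hl₁.symm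
  | cons x xs => exact not_altB_both (b := true) ⟨ha₁, ha₂⟩

/-- Core parity identity for deletions, for a list in any order. -/
lemma core_count (l : List ℤ) (hne : l ≠ []) (b : Bool) :
    (∑ j : Fin l.length, (if altB b (l.eraseIdx (j : ℕ)) = true then (1 : ZMod 2) else 0))
      = if (altB b l || altB (!b) l) = true then 1 else 0 := by
  induction l generalizing b with
  | nil => exact absurd rfl hne
  | cons x xs ih =>
    have hsum : (∑ j : Fin (x :: xs).length,
        (if altB b ((x :: xs).eraseIdx (j : ℕ)) = true then (1 : ZMod 2) else 0))
        = (if altB b xs = true then (1 : ZMod 2) else 0)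
          + ∑ j : Fin xs.length,
            (if altB b (x :: xs.eraseIdx (j : ℕ)) = true then (1 : ZMod 2) else 0) :=
      Fin.sum_univ_succ _
    rw [hsum]
    cases xs with
    | nil =>
      simp only [length_nil, Finset.univ_eq_empty, Finset.sum_empty, add_zero]
      have h1 : altB b ([] : List ℤ) = true := rfl
      rw [if_pos h1]
      have h2 : (altB b [x] || altB (!b) [x]) = true := by
        cases b <;> cases hx : decide (0 < x) <;> simp [altB, hx]
      rw [if_pos h2]
    | cons y ys =>
      have hstep : ∀ j : Fin (y :: ys).length,
          (if altB b (x :: (y :: ys).eraseIdx (j : ℕ)) = true then (1 : ZMod 2) else 0)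
          = (if (decide (0 < x) == b) = true then (1:ZMod 2) else 0)
            * (if altB (!b) ((y :: ys).eraseIdx (j : ℕ)) = true then (1 : ZMod 2) else 0) := by
        intro j
        rcases Bool.eq_false_or_eq_true (decide (0 < x) == b) with hd | hd <;>
          simp [altB, hd]
      have hnotboth : ¬(altB b (y :: ys) = true ∧ altB (!b) (y :: ys) = true) :=
        not_altB_both
      have e1 : altB b (x :: y :: ys)
          = ((decide (0 < x) == b) && altB (!b) (y :: ys)) := rfl
      have e2 : altB (!b) (x :: y :: ys)
          = ((decide (0 < x) == !b) && altB b (y :: ys)) := by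
        have h : altB (!b) (x :: y :: ys)
            = ((decide (0 < x) == !b) && altB (!!b) (y :: ys)) := rfl
        rw [h, Bool.not_not]
      have hne2 : (decide (0 < x) == !b) = !(decide (0 < x) == b) := by
        cases b <;> cases hx : decide (0 < x) <;> simp
      rw [Finset.sum_congr rfl (fun j _ => hstep j), ← Finset.mul_sum, ih (by simp) (!b),
        Bool.not_not, e1, e2, hne2]
      generalize (decide (0 < x) == b) = d at *
      generalize hP : altB b (y :: ys) = p at hnotboth ⊢
      generalize hQ : altB (!b) (y :: ys) = q at hnotboth ⊢
      cases d <;> cases p <;> cases q <;> simp_all <;> decide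


lemma perm_get_cons_eraseIdx : ∀ (l : List ℤ) (j : ℕ) (h : j < l.length),
    l.Perm (l.get ⟨j, h⟩ :: l.eraseIdx j)
  | x :: xs, 0, _ => by simp
  | x :: xs, j+1, h => by
    have hj : j < xs.length := by simpa using h
    have ih := perm_get_cons_eraseIdx xs j hj
    have h1 : (x :: xs).Perm (x :: xs.get ⟨j, hj⟩ :: xs.eraseIdx j) := ih.cons x
    have h2 : (x :: xs.get ⟨j, hj⟩ :: xs.eraseIdx j).Perm
        (xs.get ⟨j, hj⟩ :: x :: xs.eraseIdx j) := List.Perm.swap _ _ _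
    exact h1.trans h2

lemma coe_eraseIdx (l : List ℤ) (j : ℕ) (h : j < l.length) :
    (↑(l.eraseIdx j) : Multiset ℤ) = (↑l : Multiset ℤ).erase (l.get ⟨j, h⟩) := by
  have hp := perm_get_cons_eraseIdx l j h
  have hM : (↑l : Multiset ℤ) = l.get ⟨j, h⟩ ::ₘ ↑(l.eraseIdx j) := by
    rw [Multiset.cons_coe]
    exact Multiset.coe_eq_coe.mpr hp
  rw [hM, Multiset.erase_cons_head]

lemma eraseIdx_ofFn {N : ℕ} (f : Fin (N+1) → ℤ) (j : Fin (N+1)) :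
    (List.ofFn f).eraseIdx (j : ℕ) = List.ofFn (fun i => f (j.succAbove i)) := by
  apply List.ext_getElem
  · rw [List.length_eraseIdx]
    simp [j.isLt]
  · intro i h1 h2
    have hi : i < N := by simpa using h2
    rw [List.getElem_eraseIdx]
    have hR : (List.ofFn fun i => f (j.succAbove i))[i] = f (j.succAbove ⟨i, hi⟩) := by
      simp [List.getElem_ofFn]
    rw [hR]
    split
    · next hij =>
      have hs : j.succAbove ⟨i, hi⟩ = ⟨i, by omega⟩ := by
        rw [Fin.succAbove_of_castSucc_lt _ _ (by rw [Fin.lt_def]; exact hij)]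
        rfl
      rw [hs, List.getElem_ofFn]
    · next hij =>
      have hs : j.succAbove ⟨i, hi⟩ = ⟨i + 1, by omega⟩ := by
        rw [Fin.succAbove_of_le_castSucc _ _ (by rw [Fin.le_def]; exact not_lt.mp hij)]
        rfl
      rw [hs, List.getElem_ofFn]

lemma sum_map_single {M : Multiset ℤ} {g : ℤ → ZMod 2} {a₀ : ℤ}
    (h : ∀ a ∈ M, a ≠ a₀ → g a = 0) : (M.map g).sum = M.count a₀ • g a₀ := by
  induction M using Multiset.induction with
  | empty => simp
  | cons a s ih =>
    have ih' := ih (fun x hx => h x (Multiset.mem_cons_of_mem hx))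
    by_cases ha : a = a₀
    · subst ha
      rw [Multiset.map_cons, Multiset.sum_cons, ih', Multiset.count_cons_self, succ_nsmul,
        add_comm]
    · rw [Multiset.map_cons, Multiset.sum_cons, ih',
        Multiset.count_cons_of_ne (fun h' => ha h'.symm),
        h a (Multiset.mem_cons_self a s) ha, zero_add]

lemma count_abs_le (s : Multiset ℤ) (a₀ : ℤ) :
    s.count a₀ ≤ (s.map (fun x => |x|)).count |a₀| := by
  rw [Multiset.count_map, Multiset.count_eq_card_filter_eq]
  exact Multiset.card_le_card (Multiset.monotone_filter_right _ (fun x hx => by rw [← hx]))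

/-- The main deletion parity lemma. -/
lemma DLfin {N : ℕ} (Lf : Fin (N+1) → ℤ) (hnc : ∀ i j, Lf i + Lf j ≠ 0) :
    (∑ j : Fin (N+1), (if Good true (↑(List.ofFn (fun i => Lf (j.succAbove i))) : Multiset ℤ)
        then (1 : ZMod 2) else 0))
    = if (Good true (↑(List.ofFn Lf) : Multiset ℤ) ∨ Good false (↑(List.ofFn Lf) : Multiset ℤ))
        then 1 else 0 := by
  set M : Multiset ℤ := ↑(List.ofFn Lf) with hM
  set g : ℤ → ZMod 2 := fun a => if Good true (M.erase a) then 1 else 0 with hg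
  have hmem : ∀ a ∈ M, ∀ b ∈ M, a + b ≠ 0 := by
    intro a ha b hb
    rw [hM, Multiset.mem_coe, List.mem_ofFn] at ha hb
    obtain ⟨i, rfl⟩ := ha; obtain ⟨j, rfl⟩ := hb
    exact hnc i j
  have hlen : ∀ j : Fin (N+1), (j : ℕ) < (List.ofFn Lf).length := by
    intro j; simpa using j.isLt
  have hdel : ∀ j : Fin (N+1),
      (↑(List.ofFn (fun i => Lf (j.succAbove i))) : Multiset ℤ) = M.erase (Lf j) := by
    intro j
    rw [← eraseIdx_ofFn Lf j, coe_eraseIdx _ _ (hlen j)]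
    congr 1
    show (List.ofFn Lf)[(j : ℕ)]'(hlen j) = Lf j
    rw [List.getElem_ofFn]
  have hLHS : (∑ j : Fin (N+1), (if Good true
      (↑(List.ofFn (fun i => Lf (j.succAbove i))) : Multiset ℤ) then (1 : ZMod 2) else 0))
      = ((List.ofFn Lf).map g).sum := by
    rw [List.map_ofFn, List.sum_ofFn]
    exact Finset.sum_congr rfl (fun j _ => by rw [hdel j]; rfl)
  rw [hLHS]
  by_cases hd : ((List.ofFn Lf).map (fun a => |a|)).Nodup
  · -- no duplicate absolute values
    set l' := (List.ofFn Lf).mergeSort (fun a b => decide (|a| ≤ |b|)) with hl'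
    have hperm' : l'.Perm (List.ofFn Lf) := List.mergeSort_perm _ _
    have hsorted : l'.Pairwise (fun a b : ℤ => |a| ≤ |b|) := by
      have h := List.pairwise_mergeSort (le := fun a b : ℤ => decide (|a| ≤ |b|))
        (fun a b c hab hbc => by simp only [decide_eq_true_eq] at *; omega)
        (fun a b => by simp only [Bool.or_eq_true, decide_eq_true_eq]; omega)
        (List.ofFn Lf)
      exact h.imp (fun hab => by simpa using hab)
    have hnodup' : (l'.map (fun a : ℤ => |a|)).Nodup := ((hperm'.map _).nodup_iff).mpr hd
    have hpw : l'.Pairwise rAbs := by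
      have h1 : l'.Pairwise (fun a b : ℤ => |a| ≠ |b|) :=
        List.pairwise_map.mp
          (show (l'.map (fun a : ℤ => |a|)).Pairwise (· ≠ ·) from hnodup')
      exact (hsorted.and h1).imp (fun h => lt_of_le_of_ne h.1 h.2)
    have hchain : l'.Chain' rAbs := List.isChain_iff_pairwise.mpr hpw
    have hMl' : (↑l' : Multiset ℤ) = M := Multiset.coe_eq_coe.mpr hperm'
    have hne' : l' ≠ [] := by
      intro h
      have := hperm'.length_eq
      rw [h] at this
      simp at this
    have h1 : ((List.ofFn Lf).map g).sum = (l'.map g).sum := ((hperm'.map g).sum_eq).symm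
    have h2 : (l'.map g).sum = ∑ j : Fin l'.length, g (l'.get j) := by
      conv_lhs => rw [← List.ofFn_get l', List.map_ofFn, List.sum_ofFn]
      exact Finset.sum_congr rfl (fun j _ => rfl)
    have h3 : ∀ j : Fin l'.length, g (l'.get j)
        = if altB true (l'.eraseIdx (j : ℕ)) = true then (1 : ZMod 2) else 0 := by
      intro j
      have hbij : M.erase (l'.get j) = ↑(l'.eraseIdx (j : ℕ)) := by
        rw [← hMl', ← coe_eraseIdx l' j j.isLt]
      have hchain2 : (l'.eraseIdx (j : ℕ)).Chain' rAbs :=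
        List.isChain_iff_pairwise.mpr (hpw.sublist (List.eraseIdx_sublist l' (j : ℕ)))
      show (if Good true (M.erase (l'.get j)) then (1 : ZMod 2) else 0) = _
      simp only [hbij, good_coe_iff hchain2]
    rw [h1, h2, Finset.sum_congr rfl (fun j _ => h3 j), core_count l' hne' true]
    have hR : (Good true M ∨ Good false M) ↔ (altB true l' || altB (!true) l') = true := by
      rw [← hMl', good_coe_iff hchain, good_coe_iff hchain, Bool.or_eq_true]
      exact Iff.rfl
    by_cases hc : (altB true l' || altB (!true) l') = true
    · rw [if_pos hc, if_pos (hR.mpr hc)]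
    · rw [if_neg hc, if_neg (fun h => hc (hR.mp h))]
  · -- duplicated absolute value
    have hndM : ¬ (M.map (fun a => |a|)).Nodup := by
      rw [hM]
      simpa using hd
    have hRHS : ¬ (Good true M ∨ Good false M) := by
      rintro (h | h) <;> exact hndM h.nodup_abs
    rw [if_neg hRHS]
    obtain ⟨v, hv⟩ := List.exists_duplicate_iff_not_nodup.mpr hd
    have hcnt : 2 ≤ Multiset.count v (M.map (fun a => |a|)) := by
      rw [hM]
      have := List.duplicate_iff_two_le_count.mp hv
      simpa [Multiset.coe_count] using this
    have hvmem : v ∈ M.map (fun a => |a|) := by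
      rw [← Multiset.count_pos]; omega
    obtain ⟨a₀, ha₀M, ha₀v⟩ := Multiset.mem_map.mp hvmem
    have huniq : ∀ a ∈ M, |a| = v → a = a₀ := by
      intro a ha hav
      rcases abs_eq_abs.mp (hav.trans ha₀v.symm) with h | h
      · exact h
      · exact absurd (by rw [h]; ring) (hmem a ha a₀ ha₀M)
    have hcnt0 : 2 ≤ M.count a₀ := by
      have he : Multiset.count v (M.map (fun a => |a|)) = M.count a₀ := by
        rw [Multiset.count_map, Multiset.count_eq_card_filter_eq]
        congr 1
        apply Multiset.filter_congr
        intro x hx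
        constructor
        · intro h; exact (huniq x hx h.symm).symm
        · intro h; rw [← h, ha₀v]
      omega
    have hg0 : ∀ a ∈ M, a ≠ a₀ → g a = 0 := by
      intro a ha hne'
      by_cases hGa : Good true (M.erase a)
      · exfalso
        have hnd := hGa.nodup_abs
        have h2 : 2 ≤ Multiset.count a₀ (M.erase a) := by
          rw [Multiset.count_erase_of_ne (Ne.symm hne')]
          exact hcnt0
        have h3 : 2 ≤ Multiset.count v ((M.erase a).map (fun x => |x|)) := by
          calc 2 ≤ Multiset.count a₀ (M.erase a) := h2
          _ ≤ Multiset.count |a₀| ((M.erase a).map (fun x => |x|)) := count_abs_le _ _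
          _ = _ := by rw [ha₀v]
        have := Multiset.nodup_iff_count_le_one.mp hnd v
        omega
      · simp [hg, hGa]
    rw [show ((List.ofFn Lf).map g).sum = (M.map g).sum from rfl, sum_map_single hg0]
    by_cases hGa₀ : Good true (M.erase a₀)
    · have hc2 : M.count a₀ = 2 := by
        have hnd := hGa₀.nodup_abs
        have h1 : Multiset.count a₀ (M.erase a₀) ≤ 1 := by
          have h4 := count_abs_le (M.erase a₀) a₀
          have := Multiset.nodup_iff_count_le_one.mp hnd |a₀|
          omega
        have h5 := Multiset.count_erase_self a₀ M
        omega
      rw [hc2]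
      have : g a₀ = 1 := by simp [hg, hGa₀]
      rw [this]
      decide
    · have : g a₀ = 0 := by simp [hg, hGa₀]
      rw [this, smul_zero]


def sgn (b : Bool) : ℤ := if b then 1 else -1

lemma sgn_ne_zero (b : Bool) : sgn b ≠ 0 := by cases b <;> simp [sgn]
lemma abs_sgn (b : Bool) : |sgn b| = 1 := by cases b <;> simp [sgn]
lemma sgn_not (b : Bool) : sgn (!b) = -sgn b := by cases b <;> simp [sgn]

variable {n : ℕ}

/-- The `i`-th member of the chain of sign vectors determined by insertion
order `c` and signs `s`. -/
def vec {N : ℕ} (c : Fin N → Fin n) (s : Fin N → Bool) (i : Fin N) : Fin n → ℤ :=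
  fun t => ∑ j ∈ Finset.univ.filter (fun j => j ≤ i ∧ c j = t), sgn (s j)

lemma filter_eq_singleton {N : ℕ} {c : Fin N → Fin n} (hc : Function.Injective c)
    (i : Fin N) {j₀ : Fin N} (hj : j₀ ≤ i) {t : Fin n} (ht : c j₀ = t) :
    Finset.univ.filter (fun j => j ≤ i ∧ c j = t) = {j₀} := by
  ext j
  simp only [Finset.mem_filter, Finset.mem_univ, true_and, Finset.mem_singleton]
  constructor
  · rintro ⟨h1, h2⟩
    exact hc (h2.trans ht.symm)
  · rintro rfl
    exact ⟨hj, ht⟩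

lemma vec_eq_sgn {N : ℕ} {c : Fin N → Fin n} (hc : Function.Injective c)
    (s : Fin N → Bool) (i : Fin N) {j₀ : Fin N} (hj : j₀ ≤ i) {t : Fin n} (ht : c j₀ = t) :
    vec c s i t = sgn (s j₀) := by
  rw [vec, filter_eq_singleton hc i hj ht, Finset.sum_singleton]

lemma vec_eq_zero {N : ℕ} (c : Fin N → Fin n) (s : Fin N → Bool) (i : Fin N) {t : Fin n}
    (h : ¬∃ j₀, j₀ ≤ i ∧ c j₀ = t) : vec c s i t = 0 := by
  rw [vec]
  convert Finset.sum_empty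
  ext j
  simp only [Finset.mem_filter, Finset.mem_univ, true_and, Finset.notMem_empty, iff_false]
  exact fun hj => h ⟨j, hj⟩

lemma vec_abs_le {N : ℕ} {c : Fin N → Fin n} (hc : Function.Injective c)
    (s : Fin N → Bool) (i : Fin N) (t : Fin n) : |vec c s i t| ≤ 1 := by
  by_cases h : ∃ j₀, j₀ ≤ i ∧ c j₀ = t
  · obtain ⟨j₀, hj, ht⟩ := h
    rw [vec_eq_sgn hc s i hj ht, abs_sgn]
  · rw [vec_eq_zero c s i h]
    simp

lemma vec_ne_zero {N : ℕ} {c : Fin N → Fin n} (hc : Function.Injective c)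
    (s : Fin N → Bool) (i : Fin N) : vec c s i ≠ 0 := by
  intro h
  have h1 : vec c s i (c i) = sgn (s i) := vec_eq_sgn hc s i le_rfl rfl
  rw [h] at h1
  exact sgn_ne_zero (s i) (by simpa using h1.symm)

lemma vec_compat {N : ℕ} {c : Fin N → Fin n} (hc : Function.Injective c)
    (s : Fin N → Bool) {i i' : Fin N} (hii : i ≤ i') (t : Fin n)
    (hne : vec c s i t ≠ 0) : vec c s i' t = vec c s i t := by
  by_cases h : ∃ j₀, j₀ ≤ i ∧ c j₀ = t
  · obtain ⟨j₀, hj, ht⟩ := h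
    rw [vec_eq_sgn hc s i hj ht, vec_eq_sgn hc s i' (hj.trans hii) ht]
  · exact absurd (vec_eq_zero c s i h) hne

lemma vec_neg {N : ℕ} (c : Fin N → Fin n) (s : Fin N → Bool) (i : Fin N) :
    vec c (fun p => !(s p)) i = -(vec c s i) := by
  funext t
  simp only [vec, Pi.neg_apply, ← Finset.sum_neg_distrib]
  exact Finset.sum_congr rfl (fun j _ => sgn_not (s j))

lemma vec_comp_equiv {N : ℕ} (c : Fin N → Fin n) (s : Fin N → Bool) (σ : Equiv.Perm (Fin N))
    (i : Fin N) (hσ : ∀ x, x ≤ i ↔ σ x ≤ i) :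
    vec (c ∘ σ) (s ∘ σ) i = vec c s i := by
  funext t
  rw [vec, vec]
  refine Finset.sum_equiv σ ?_ ?_
  · intro x
    simp only [Finset.mem_filter, Finset.mem_univ, true_and, Function.comp_apply]
    exact and_congr_left' (hσ x)
  · intro x _
    rfl

lemma vec_update {N : ℕ} (c : Fin N → Fin n) (s : Fin N → Bool) (jt : Fin N) (b : Bool)
    (i : Fin N) (hi : ¬ jt ≤ i) : vec c (Function.update s jt b) i = vec c s i := by
  funext t
  refine Finset.sum_congr rfl ?_
  intro j hj
  simp only [Finset.mem_filter] at hj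
  have : j ≠ jt := fun h => hi (h ▸ hj.2.1)
  rw [Function.update_of_ne this]

lemma vec_castSucc {N : ℕ} (c : Fin (N+1) → Fin n) (s : Fin (N+1) → Bool) (i : Fin N) :
    vec c s (Fin.castSucc i) = vec (c ∘ Fin.castSucc) (s ∘ Fin.castSucc) i := by
  funext t
  rw [vec, vec]
  refine Finset.sum_bij' (fun j hj => ⟨(j : ℕ), ?_⟩) (fun j _ => Fin.castSucc j) ?_ ?_ ?_ ?_ ?_
  · simp only [Finset.mem_filter, Finset.mem_univ, true_and] at hj
    have := hj.1
    rw [Fin.le_def] at this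
    simp only [Fin.coe_castSucc] at this
    omega
  · intro j hj
    simp only [Finset.mem_filter, Finset.mem_univ, true_and] at hj ⊢
    refine ⟨?_, ?_⟩
    · rw [Fin.le_def]
      rw [Fin.le_def] at hj
      simpa using hj.1
    · simpa using hj.2
  · intro j hj
    simp only [Finset.mem_filter, Finset.mem_univ, true_and] at hj ⊢
    refine ⟨?_, hj.2⟩
    rw [Fin.le_def] at hj ⊢
    simpa using hj.1
  · intro j hj
    apply Fin.ext
    rfl
  · intro j hj
    apply Fin.ext
    rfl
  · intro j hj
    rfl


section counting

variable (lam : (Fin n → ℤ) → ℤ) {m : ℕ}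

/-- conditions for `(c, s)` to describe a full flag of order `N` -/
def flagCond {N : ℕ} (cs : (Fin N → Fin n) × (Fin N → Bool)) : Prop :=
  (∀ i, ((cs.1 i) : ℕ) < N) ∧ Function.Injective cs.1

/-- the labels of the flag -/
noncomputable def labL {N : ℕ} (cs : (Fin N → Fin n) × (Fin N → Bool)) : Fin N → ℤ :=
  fun i => lam (vec cs.1 cs.2 i)

/-- number of positively alternating flags of order `N` -/
noncomputable def Acard (N : ℕ) : ℕ :=
  (Finset.univ.filter (fun cs : (Fin N → Fin n) × (Fin N → Bool) =>
    flagCond cs ∧ Good true (↑(List.ofFn (labL lam cs)) : Multiset ℤ))).card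

variable (hrange : ∀ x : Fin n → ℤ, (∀ i, |x i| ≤ 1) → x ≠ 0 → lam x ≠ 0 ∧ |lam x| ≤ (m : ℤ))
variable (hanti : ∀ x : Fin n → ℤ, (∀ i, |x i| ≤ 1) → x ≠ 0 → lam (-x) = -lam x)
variable (hcomp : ∀ x y : Fin n → ℤ, (∀ i, |x i| ≤ 1) → x ≠ 0 →
      (∀ i, |y i| ≤ 1) → y ≠ 0 → (∀ i, x i ≠ 0 → y i = x i) → lam x + lam y ≠ 0)

include hrange in
lemma lab_ne_zero {N : ℕ} {cs : (Fin N → Fin n) × (Fin N → Bool)}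
    (hc : Function.Injective cs.1) (i : Fin N) : labL lam cs i ≠ 0 :=
  (hrange _ (vec_abs_le hc _ _) (vec_ne_zero hc _ _)).1

include hrange in
lemma lab_abs_le {N : ℕ} {cs : (Fin N → Fin n) × (Fin N → Bool)}
    (hc : Function.Injective cs.1) (i : Fin N) : |labL lam cs i| ≤ (m : ℤ) :=
  (hrange _ (vec_abs_le hc _ _) (vec_ne_zero hc _ _)).2

include hcomp in
lemma lab_nocomp {N : ℕ} {cs : (Fin N → Fin n) × (Fin N → Bool)}
    (hc : Function.Injective cs.1) (i j : Fin N) :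
    labL lam cs i + labL lam cs j ≠ 0 := by
  have key : ∀ i j : Fin N, i ≤ j → labL lam cs i + labL lam cs j ≠ 0 := by
    intro i j hij
    exact hcomp _ _ (vec_abs_le hc _ _) (vec_ne_zero hc _ _) (vec_abs_le hc _ _)
      (vec_ne_zero hc _ _) (fun t ht => vec_compat hc _ hij t ht)
  rcases le_total i j with h | h
  · exact key i j h
  · rw [add_comm]
    exact key j i h

include hanti in
lemma lab_neg {N : ℕ} {c : Fin N → Fin n} {s : Fin N → Bool}
    (hc : Function.Injective c) (i : Fin N) :
    labL lam (c, fun p => !(s p)) i = -(labL lam (c, s) i) := by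
  show lam (vec c (fun p => !(s p)) i) = -(lam (vec c s i))
  rw [vec_neg]
  exact hanti _ (vec_abs_le hc _ _) (vec_ne_zero hc _ _)

lemma altB_map_neg : ∀ (l : List ℤ) (b : Bool), (∀ a ∈ l, a ≠ 0) → altB b l = true →
    altB (!b) (l.map (fun a => -a)) = true := by
  intro l
  induction l with
  | nil => intro b _ _; rfl
  | cons x xs ih =>
    intro b h0 hb
    have hx : x ≠ 0 := h0 x (List.mem_cons_self)
    rw [altB, Bool.and_eq_true, beq_iff_eq] at hb
    show ((decide (0 < -x) == !b) && altB (!!b) (xs.map (fun a => -a))) = true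
    rw [Bool.and_eq_true, beq_iff_eq, Bool.not_not]
    constructor
    · rw [← hb.1]
      rcases lt_or_gt_of_ne hx with h | h
      · simp only [not_lt.mpr h.le, decide_eq_false, Bool.not_false]
        simp [h]
      · simp only [h, decide_eq_true, Bool.not_true]
        simp [not_le.mpr h, h.le]
    · have := ih (!b) (fun a ha => h0 a (List.mem_cons_of_mem x ha)) hb.2
      simpa using this

lemma good_ofFn_neg {N : ℕ} (L : Fin N → ℤ) (h0 : ∀ i, L i ≠ 0) (b : Bool)
    (h : Good b (↑(List.ofFn L) : Multiset ℤ)) :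
    Good (!b) (↑(List.ofFn (fun i => -(L i))) : Multiset ℤ) := by
  obtain ⟨l, hl, hc, ha⟩ := h
  refine ⟨l.map (fun a => -a), ?_, ?_, ?_⟩
  · have e1 : (List.ofFn (fun i => -(L i))) = (List.ofFn L).map (fun a => -a) := by
      rw [List.map_ofFn]; rfl
    rw [e1, ← Multiset.map_coe, ← Multiset.map_coe, hl]
  · show List.IsChain _ _
    rw [List.isChain_map]
    exact List.IsChain.imp (fun hab => by simpa [rAbs] using hab) hc
  · apply altB_map_neg l b _ ha
    intro a hal
    have hmem : a ∈ (↑l : Multiset ℤ) := hal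
    rw [hl] at hmem
    obtain ⟨i, rfl⟩ := List.mem_ofFn.mp hmem
    exact h0 i

lemma good_ofFn_neg_iff {N : ℕ} (L : Fin N → ℤ) (h0 : ∀ i, L i ≠ 0) (b : Bool) :
    Good b (↑(List.ofFn L) : Multiset ℤ)
      ↔ Good (!b) (↑(List.ofFn (fun i => -(L i))) : Multiset ℤ) := by
  constructor
  · exact good_ofFn_neg L h0 b
  · intro h
    have h2 := good_ofFn_neg (fun i => -(L i)) (fun i => neg_ne_zero.mpr (h0 i)) (!b) h
    simpa using h2

/-- bound on the length of a strictly increasing (in absolute value) chain -/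
lemma chain_abs_length : ∀ (l : List ℤ) (c : ℤ), l.Pairwise rAbs → (∀ a ∈ l, c < |a|) →
    ∀ b : ℤ, (∀ a ∈ l, |a| ≤ b) → l = [] ∨ c + l.length ≤ b := by
  intro l
  induction l with
  | nil => intro c _ _ b _; left; rfl
  | cons x xs ih =>
    intro c hpw hlow b hhigh
    right
    have hcx : c < |x| := hlow x (List.mem_cons_self)
    rw [List.pairwise_cons] at hpw
    have hall : ∀ a ∈ xs, |x| < |a| := hpw.1
    rcases ih |x| hpw.2 hall b (fun a ha => hhigh a (List.mem_cons_of_mem x ha)) with h | h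
    · subst h
      have := hhigh x (List.mem_cons_self)
      simp only [List.length_cons, List.length_nil]
      push_cast
      omega
    · simp only [List.length_cons]
      push_cast at h ⊢
      omega


/-- top-sign condition -/
def Tcond {k : ℕ} (cs : (Fin (k+1) → Fin n) × (Fin (k+1) → Bool)) : Prop :=
  ∀ p, ((cs.1 p : ℕ) = k) → cs.2 p = true

noncomputable def PY {k : ℕ} (cs : (Fin (k+1) → Fin n) × (Fin (k+1) → Bool)) : Prop :=
  flagCond cs ∧ Tcond cs ∧ (Good true (↑(List.ofFn (labL lam cs)) : Multiset ℤ)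
    ∨ Good false (↑(List.ofFn (labL lam cs)) : Multiset ℤ))

noncomputable def PI {k : ℕ}
    (x : ((Fin (k+1) → Fin n) × (Fin (k+1) → Bool)) × Fin (k+1)) : Prop :=
  flagCond x.1 ∧ Tcond x.1 ∧
    Good true (↑(List.ofFn (fun i : Fin k => labL lam x.1 (x.2.succAbove i))) : Multiset ℤ)

def PfixP {k : ℕ} (x : ((Fin (k+1) → Fin n) × (Fin (k+1) → Bool)) × Fin (k+1)) : Prop :=
  ((x.2 : ℕ) = k) ∧ ((x.1.1 x.2 : ℕ) = k)

lemma ofFn_ne_zero {N : ℕ} (L : Fin (N+1) → ℤ) : (↑(List.ofFn L) : Multiset ℤ) ≠ 0 := by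
  rw [Ne, Multiset.coe_eq_zero]
  intro h
  have := congrArg List.length h
  simp at this

lemma exists_top {k : ℕ} (hkn : k + 1 ≤ n)
    {cs : (Fin (k+1) → Fin n) × (Fin (k+1) → Bool)} (hf : flagCond cs) :
    ∃ p, (cs.1 p : ℕ) = k := by
  have e : Fin (k+1) → Fin (k+1) := fun p => ⟨(cs.1 p : ℕ), hf.1 p⟩
  have he : Function.Injective (fun p => (⟨(cs.1 p : ℕ), hf.1 p⟩ : Fin (k+1))) := by
    intro a b hab
    have h2 := congrArg Fin.val hab
    exact hf.2 (Fin.ext h2)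
  have hsurj := (Finite.injective_iff_surjective).mp he
  obtain ⟨p, hp⟩ := hsurj ⟨k, Nat.lt_succ_self k⟩
  exact ⟨p, congrArg Fin.val hp⟩

lemma card_filter_zmod {α : Type*} [Fintype α] (p : α → Prop) :
    (((Finset.univ.filter p).card : ℕ) : ZMod 2) = ∑ x : α, if p x then (1 : ZMod 2) else 0 := by
  rw [Finset.card_filter, Nat.cast_sum]
  exact Finset.sum_congr rfl (fun x _ => by split <;> simp)

include hrange hanti in
/-- Step (1): sign-flip bijection. -/
lemma card_X_eq_Y {k : ℕ} (hkn : k + 1 ≤ n) :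
    Acard lam (k+1) = (Finset.univ.filter (fun cs : (Fin (k+1) → Fin n) × (Fin (k+1) → Bool) =>
      PY lam cs)).card := by
  classical
  have hGneg : ∀ (c : Fin (k+1) → Fin n) (s : Fin (k+1) → Bool), Function.Injective c →
      ∀ b, (Good b (↑(List.ofFn (labL lam (c, s))) : Multiset ℤ) ↔
        Good (!b) (↑(List.ofFn (labL lam (c, fun p => !(s p)))) : Multiset ℤ)) := by
    intro c s hc b
    have h1 : (labL lam (c, fun p => !(s p))) = fun i => -(labL lam (c, s) i) :=
      funext (fun i => lab_neg lam hanti hc i)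
    rw [h1]
    exact good_ofFn_neg_iff _ (fun i => lab_ne_zero lam hrange (cs := (c, s)) hc i) b
  have hTneg : ∀ (cs : (Fin (k+1) → Fin n) × (Fin (k+1) → Bool)), flagCond cs → ¬ Tcond cs →
      Tcond ((cs.1, fun p => !(cs.2 p)) : (Fin (k+1) → Fin n) × (Fin (k+1) → Bool)) := by
    intro cs hf hT
    rw [Tcond] at hT
    push_neg at hT
    obtain ⟨p₀, hp₀, hsp₀⟩ := hT
    intro p hp
    have : p = p₀ := by
      apply hf.2
      apply Fin.ext
      rw [hp, hp₀]
    subst this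
    simp [Bool.not_eq_true] at hsp₀ ⊢
    exact hsp₀
  refine Finset.card_bij'
    (fun cs _ => if Tcond cs then cs else (cs.1, fun p => !(cs.2 p)))
    (fun cs _ => if Good true (↑(List.ofFn (labL lam cs)) : Multiset ℤ) then cs
      else (cs.1, fun p => !(cs.2 p))) ?_ ?_ ?_ ?_
  · -- maps into Y
    intro cs hcs
    simp only [Finset.mem_filter, Finset.mem_univ, true_and] at hcs ⊢
    obtain ⟨hf, hG⟩ := hcs
    by_cases hT : Tcond cs
    · rw [if_pos hT]
      exact ⟨hf, hT, Or.inl hG⟩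
    · rw [if_neg hT]
      refine ⟨hf, hTneg cs hf hT, Or.inr ?_⟩
      have := (hGneg cs.1 cs.2 hf.2 true).mp hG
      simpa using this
  · -- maps into X
    intro cs hcs
    simp only [Finset.mem_filter, Finset.mem_univ, true_and] at hcs ⊢
    obtain ⟨hf, hT, hG⟩ := hcs
    by_cases hGt : Good true (↑(List.ofFn (labL lam cs)) : Multiset ℤ)
    · rw [if_pos hGt]
      exact ⟨hf, hGt⟩
    · rw [if_neg hGt]
      have hGf : Good false (↑(List.ofFn (labL lam cs)) : Multiset ℤ) := hG.resolve_left hGt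
      refine ⟨hf, ?_⟩
      have := (hGneg cs.1 cs.2 hf.2 false).mp hGf
      simpa using this
  · -- left inverse
    intro cs hcs
    simp only [Finset.mem_filter, Finset.mem_univ, true_and] at hcs
    obtain ⟨hf, hG⟩ := hcs
    by_cases hT : Tcond cs
    · rw [if_pos hT, if_pos hG]
    · rw [if_neg hT]
      have hGf : Good false (↑(List.ofFn (labL lam
          ((cs.1, fun p => !(cs.2 p)) : (Fin (k+1) → Fin n) × (Fin (k+1) → Bool)))) : Multiset ℤ) := by
        have := (hGneg cs.1 cs.2 hf.2 true).mp hG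
        simpa using this
      have hnGt : ¬ Good true (↑(List.ofFn (labL lam
          ((cs.1, fun p => !(cs.2 p)) : (Fin (k+1) → Fin n) × (Fin (k+1) → Bool)))) : Multiset ℤ) := by
        intro hGt
        exact not_good_both (ofFn_ne_zero _) ⟨hGt, hGf⟩
      rw [if_neg hnGt]
      apply Prod.ext
      · rfl
      · funext p
        simp
  · -- right inverse
    intro cs hcs
    simp only [Finset.mem_filter, Finset.mem_univ, true_and] at hcs
    obtain ⟨hf, hT, hG⟩ := hcs
    by_cases hGt : Good true (↑(List.ofFn (labL lam cs)) : Multiset ℤ)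
    · rw [if_pos hGt, if_pos hT]
    · rw [if_neg hGt]
      have hnT : ¬ Tcond ((cs.1, fun p => !(cs.2 p)) :
          (Fin (k+1) → Fin n) × (Fin (k+1) → Bool)) := by
        obtain ⟨p, hp⟩ := exists_top hkn hf
        intro hT'
        have h1 := hT p hp
        have h2 := hT' p hp
        simp only [h1] at h2
        exact Bool.not_ne_self true (by simpa using h2)
      rw [if_neg hnT]
      apply Prod.ext
      · rfl
      · funext p
        simp


include hcomp in
/-- Step (2): per-flag deletion parity via DLfin. -/
lemma card_Y_eq_I {k : ℕ} :
    (((Finset.univ.filter (fun cs : (Fin (k+1) → Fin n) × (Fin (k+1) → Bool) =>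
        PY lam cs)).card : ℕ) : ZMod 2)
    = (((Finset.univ.filter (fun x : ((Fin (k+1) → Fin n) × (Fin (k+1) → Bool)) × Fin (k+1) =>
        PI lam x)).card : ℕ) : ZMod 2) := by
  rw [card_filter_zmod, card_filter_zmod]
  conv_rhs => rw [Fintype.sum_prod_type]
  apply Finset.sum_congr rfl
  intro cs _
  by_cases hft : flagCond cs ∧ Tcond cs
  · have h1 : ∀ j : Fin (k+1), (if PI lam (cs, j) then (1:ZMod 2) else 0)
        = if Good true (↑(List.ofFn (fun i : Fin k => labL lam cs (j.succAbove i))) : Multiset ℤ)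
            then 1 else 0 := by
      intro j
      refine if_congr ?_ rfl rfl
      constructor
      · exact fun h => h.2.2
      · exact fun h => ⟨hft.1, hft.2, h⟩
    rw [Finset.sum_congr rfl (fun j _ => h1 j),
      DLfin (labL lam cs) (lab_nocomp lam hcomp hft.1.2)]
    refine if_congr ?_ rfl rfl
    constructor
    · exact fun h => h.2.2
    · exact fun h => ⟨hft.1, hft.2, h⟩
  · have h1 : (if PY lam cs then (1:ZMod 2) else 0) = 0 := by
      rw [if_neg]
      intro h
      exact hft ⟨h.1, h.2.1⟩
    have h2 : ∀ j : Fin (k+1), (if PI lam (cs, j) then (1:ZMod 2) else 0) = 0 := by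
      intro j
      rw [if_neg]
      intro h
      exact hft ⟨h.1, h.2.1⟩
    rw [h1, Finset.sum_congr rfl (fun j _ => h2 j), Finset.sum_const_zero]

lemma swap_le_iff {N : ℕ} (j : Fin (N+1)) (hj : (j : ℕ) < N) (a : Fin (N+1)) (ha : a ≠ j)
    (x : Fin (N+1)) : x ≤ a ↔ (Equiv.swap j (⟨(j:ℕ)+1, by omega⟩ : Fin (N+1))) x ≤ a := by
  have haj : (a : ℕ) ≠ (j : ℕ) := fun h => ha (Fin.ext h)
  rcases eq_or_ne x j with rfl | hxj
  · rw [Equiv.swap_apply_left]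
    have h1 : ((⟨(x:ℕ)+1, by omega⟩ : Fin (N+1)) : ℕ) = (x:ℕ)+1 := rfl
    simp only [Fin.le_def, h1]
    omega
  · rcases eq_or_ne x (⟨(j:ℕ)+1, by omega⟩ : Fin (N+1)) with rfl | hxj1
    · rw [Equiv.swap_apply_right]
      have h1 : ((⟨(j:ℕ)+1, by omega⟩ : Fin (N+1)) : ℕ) = (j:ℕ)+1 := rfl
      simp only [Fin.le_def, h1]
      omega
    · rw [Equiv.swap_apply_of_ne_of_ne hxj hxj1]

noncomputable def phi (k : ℕ)
    (x : ((Fin (k+1) → Fin n) × (Fin (k+1) → Bool)) × Fin (k+1)) :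
    ((Fin (k+1) → Fin n) × (Fin (k+1) → Bool)) × Fin (k+1) :=
  if hj : (x.2 : ℕ) < k then
    ((x.1.1 ∘ (Equiv.swap x.2 ⟨(x.2 : ℕ)+1, by omega⟩),
      x.1.2 ∘ (Equiv.swap x.2 ⟨(x.2 : ℕ)+1, by omega⟩)), x.2)
  else if ((x.1.1 x.2 : ℕ) = k) then x
  else ((x.1.1, Function.update x.1.2 x.2 (!(x.1.2 x.2))), x.2)

lemma phi_spec {k : ℕ} (x : ((Fin (k+1) → Fin n) × (Fin (k+1) → Bool)) × Fin (k+1))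
    (hPI : PI lam x) (hnf : ¬ PfixP x) :
    (PI lam (phi k x) ∧ ¬ PfixP (phi k x)) ∧ phi k (phi k x) = x ∧ phi k x ≠ x := by
  obtain ⟨⟨c, s⟩, j⟩ := x
  obtain ⟨hf, hT, hG⟩ := hPI
  by_cases hj : (j : ℕ) < k
  · -- swap case
    set σ : Equiv.Perm (Fin (k+1)) := Equiv.swap j ⟨(j:ℕ)+1, by omega⟩ with hσ
    have hphix : phi k ((c, s), j) = ((c ∘ σ, s ∘ σ), j) := by
      simp only [phi]
      rw [dif_pos hj]
    have hlab : (fun i : Fin k => labL lam ((c ∘ σ, s ∘ σ)) (j.succAbove i))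
        = fun i : Fin k => labL lam ((c, s)) (j.succAbove i) := by
      funext i
      show lam (vec (c ∘ σ) (s ∘ σ) (j.succAbove i)) = lam (vec c s (j.succAbove i))
      rw [vec_comp_equiv c s σ _ (swap_le_iff j hj _ (Fin.succAbove_ne j i))]
    have hfσ : flagCond ((c ∘ σ, s ∘ σ) : (Fin (k+1) → Fin n) × (Fin (k+1) → Bool)) :=
      ⟨fun i => hf.1 (σ i), hf.2.comp σ.injective⟩
    have hTσ : Tcond ((c ∘ σ, s ∘ σ) : (Fin (k+1) → Fin n) × (Fin (k+1) → Bool)) :=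
      fun p hp => hT (σ p) hp
    refine ⟨⟨?_, ?_⟩, ?_, ?_⟩
    · rw [hphix]
      refine ⟨hfσ, hTσ, ?_⟩
      show Good true (↑(List.ofFn (fun i : Fin k =>
        labL lam ((c ∘ σ, s ∘ σ)) (j.succAbove i))) : Multiset ℤ)
      rw [hlab]
      exact hG
    · rw [hphix]
      intro hPf
      have h2 : (j : ℕ) = k := hPf.1
      omega
    · rw [hphix]
      simp only [phi]
      rw [dif_pos hj]
      refine Prod.ext (Prod.ext ?_ ?_) rfl
      · funext p
        show c (σ (σ p)) = c p
        rw [Equiv.swap_apply_self]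
      · funext p
        show s (σ (σ p)) = s p
        rw [Equiv.swap_apply_self]
    · rw [hphix]
      intro h
      have hc1 : c ∘ σ = c := congrArg (fun y => y.1.1) h
      have hc2 : c (σ j) = c j := congrFun hc1 j
      have hc3 : σ j = j := hf.2 hc2
      rw [hσ, Equiv.swap_apply_left] at hc3
      have := congrArg Fin.val hc3
      simp at this
  · -- flip case
    have hjk : (j : ℕ) = k := by
      have := j.isLt
      omega
    have hcj : ((c j : ℕ) = k) → False := fun h => hnf ⟨hjk, h⟩
    have hphix : phi k ((c, s), j)
        = ((c, Function.update s j (!(s j))), j) := by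
      simp only [phi]
      rw [dif_neg hj, if_neg hcj]
    have hlast : j = Fin.last k := Fin.ext (by simpa using hjk)
    have hnle : ∀ i : Fin k, ¬ j ≤ j.succAbove i := by
      intro i
      rw [hlast, Fin.succAbove_last]
      simp only [Fin.le_def, Fin.val_last, Fin.coe_castSucc]
      have := i.isLt
      omega
    have hlab : ∀ (b : Bool), (fun i : Fin k =>
          labL lam ((c, Function.update s j b)) (j.succAbove i))
        = fun i : Fin k => labL lam ((c, s)) (j.succAbove i) := by
      intro b
      funext i
      show lam (vec c (Function.update s j b) (j.succAbove i)) = lam (vec c s (j.succAbove i))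
      rw [vec_update c s j b _ (hnle i)]
    refine ⟨⟨?_, ?_⟩, ?_, ?_⟩
    · rw [hphix]
      refine ⟨⟨hf.1, hf.2⟩, ?_, ?_⟩
      · intro p hp
        have hval : (c p : ℕ) = k := hp
        have hpj : p ≠ j := fun h => hcj (h ▸ hval)
        show Function.update s j (!(s j)) p = true
        rw [Function.update_of_ne hpj]
        exact hT p hval
      · show Good true (↑(List.ofFn (fun i : Fin k =>
          labL lam ((c, Function.update s j (!(s j)))) (j.succAbove i))) : Multiset ℤ)
        rw [hlab]
        exact hG
    · rw [hphix]
      intro hPf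
      exact hcj hPf.2
    · rw [hphix]
      simp only [phi]
      rw [dif_neg hj, if_neg hcj]
      refine Prod.ext (Prod.ext rfl ?_) rfl
      show Function.update (Function.update s j (!(s j))) j
          (!(Function.update s j (!(s j)) j)) = s
      rw [Function.update_self, Bool.not_not, Function.update_idem, Function.update_eq_self]
    · rw [hphix]
      intro h
      have hs1 : Function.update s j (!(s j)) = s := congrArg (fun y => y.1.2) h
      have hs2 : Function.update s j (!(s j)) j = s j := congrFun hs1 j
      rw [Function.update_self] at hs2
      exact Bool.not_ne_self (s j) hs2

/-- Step (3): parity of the incidence count equals the fixed-point count. -/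
lemma card_I_eq_fix {k : ℕ} :
    (((Finset.univ.filter (fun x : ((Fin (k+1) → Fin n) × (Fin (k+1) → Bool)) × Fin (k+1) =>
        PI lam x)).card : ℕ) : ZMod 2)
    = (((Finset.univ.filter (fun x : ((Fin (k+1) → Fin n) × (Fin (k+1) → Bool)) × Fin (k+1) =>
        PI lam x ∧ PfixP x)).card : ℕ) : ZMod 2) := by
  classical
  have hsplit :
      ((Finset.univ.filter (fun x : ((Fin (k+1) → Fin n) × (Fin (k+1) → Bool)) × Fin (k+1) =>
        PI lam x ∧ PfixP x)).card)
      + ((Finset.univ.filter (fun x : ((Fin (k+1) → Fin n) × (Fin (k+1) → Bool)) × Fin (k+1) =>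
        PI lam x ∧ ¬ PfixP x)).card)
      = (Finset.univ.filter (fun x : ((Fin (k+1) → Fin n) × (Fin (k+1) → Bool)) × Fin (k+1) =>
        PI lam x)).card := by
    rw [← Finset.filter_filter, ← Finset.filter_filter]
    exact Finset.card_filter_add_card_filter_not (p := PfixP)
  have hmove :
      (((Finset.univ.filter (fun x : ((Fin (k+1) → Fin n) × (Fin (k+1) → Bool)) × Fin (k+1) =>
        PI lam x ∧ ¬ PfixP x)).card : ℕ) : ZMod 2) = 0 := by
    have hsum : ∑ _x ∈ (Finset.univ.filter
        (fun x : ((Fin (k+1) → Fin n) × (Fin (k+1) → Bool)) × Fin (k+1) =>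
          PI lam x ∧ ¬ PfixP x)), (1 : ZMod 2) = 0 := by
      apply Finset.sum_involution (g := fun x _ => phi k x)
      · intro a _
        decide
      · intro a ha _
        simp only [Finset.mem_filter, Finset.mem_univ, true_and] at ha
        exact ((phi_spec lam a ha.1 ha.2).2.2)
      · intro a ha
        simp only [Finset.mem_filter, Finset.mem_univ, true_and] at ha ⊢
        exact (phi_spec lam a ha.1 ha.2).1
      · intro a ha
        simp only [Finset.mem_filter, Finset.mem_univ, true_and] at ha
        exact (phi_spec lam a ha.1 ha.2).2.1
    rw [Finset.sum_const, nsmul_eq_mul, mul_one] at hsum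
    exact hsum
  rw [← hsplit]
  push_cast
  rw [hmove]
  ring


lemma hlabres {k : ℕ} (c : Fin (k+1) → Fin n) (s : Fin (k+1) → Bool) (i : Fin k) :
    labL lam ((c ∘ Fin.castSucc, s ∘ Fin.castSucc) : (Fin k → Fin n) × (Fin k → Bool)) i
      = labL lam ((c, s)) ((Fin.last k).succAbove i) := by
  show lam (vec (c ∘ Fin.castSucc) (s ∘ Fin.castSucc) i) = lam (vec c s ((Fin.last k).succAbove i))
  rw [Fin.succAbove_last, vec_castSucc]

/-- Step (4): fixed points correspond to order-`k` flags. -/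
lemma card_fix_eq_A {k : ℕ} (hkn : k + 1 ≤ n) :
    (Finset.univ.filter (fun x : ((Fin (k+1) → Fin n) × (Fin (k+1) → Bool)) × Fin (k+1) =>
        PI lam x ∧ PfixP x)).card = Acard lam k := by
  classical
  rw [Acard]
  refine Finset.card_bij'
    (fun x _ => ((x.1.1 ∘ Fin.castSucc, x.1.2 ∘ Fin.castSucc) :
      (Fin k → Fin n) × (Fin k → Bool)))
    (fun cs _ => (((Fin.snoc cs.1 ⟨k, hkn⟩ : Fin (k+1) → Fin n),
      (Fin.snoc cs.2 true : Fin (k+1) → Bool)), Fin.last k)) ?_ ?_ ?_ ?_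
  · -- forward membership
    rintro ⟨⟨c, s⟩, j⟩ hx
    simp only [Finset.mem_filter, Finset.mem_univ, true_and] at hx ⊢
    obtain ⟨⟨hf, hT, hG⟩, hPf⟩ := hx
    have hj1 : (j : ℕ) = k := hPf.1
    have hj2 : (c j : ℕ) = k := hPf.2
    have hlastj : j = Fin.last k := Fin.ext (by simpa using hj1)
    refine ⟨⟨?_, ?_⟩, ?_⟩
    · intro i
      have h1 : ((c (Fin.castSucc i)) : ℕ) < k + 1 := hf.1 _
      have hne : ((c (Fin.castSucc i)) : ℕ) ≠ k := by
        intro he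
        have he2 : c (Fin.castSucc i) = c j := Fin.ext (he.trans hj2.symm)
        have h3 := hf.2 he2
        rw [hlastj] at h3
        have h4 := congrArg Fin.val h3
        simp only [Fin.coe_castSucc, Fin.val_last] at h4
        have := i.isLt
        omega
      show ((c (Fin.castSucc i)) : ℕ) < k
      omega
    · exact hf.2.comp (Fin.castSucc_injective k)
    · rw [hlastj] at hG
      have heq : (labL lam ((c ∘ Fin.castSucc, s ∘ Fin.castSucc) :
          (Fin k → Fin n) × (Fin k → Bool)))
          = fun i : Fin k => labL lam ((c, s)) ((Fin.last k).succAbove i) :=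
        funext (fun i => hlabres lam c s i)
      rw [heq]
      exact hG
  · -- backward membership
    rintro ⟨c', s'⟩ hcs
    simp only [Finset.mem_filter, Finset.mem_univ, true_and] at hcs ⊢
    obtain ⟨hf', hG'⟩ := hcs
    have hb : ∀ p : Fin k, ((c' p : Fin n) : ℕ) < k := hf'.1
    have hinj : Function.Injective c' := hf'.2
    have hkey : ∀ p : Fin k,
        (Fin.snoc c' (⟨k, hkn⟩ : Fin n) : Fin (k+1) → Fin n) (Fin.castSucc p) = c' p :=
      fun p => Fin.snoc_castSucc _ _ _
    have hkey2 : ∀ p : Fin k,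
        (Fin.snoc s' true : Fin (k+1) → Bool) (Fin.castSucc p) = s' p :=
      fun p => Fin.snoc_castSucc _ _ _
    refine ⟨⟨⟨?_, ?_⟩, ?_, ?_⟩, ?_, ?_⟩
    · intro i
      dsimp only
      refine Fin.lastCases ?_ ?_ i
      · rw [Fin.snoc_last]
        simp
      · intro p
        rw [hkey p]
        have := hb p
        omega
    · intro a b hab
      dsimp only at hab
      induction a using Fin.lastCases with
      | last =>
        induction b using Fin.lastCases with
        | last => rfl
        | cast q =>
          rw [Fin.snoc_last, hkey q] at hab
          have h1 : k = ((c' q : Fin n) : ℕ) := congrArg Fin.val hab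
          have h2 := hb q
          exfalso
          omega
      | cast p =>
        induction b using Fin.lastCases with
        | last =>
          rw [Fin.snoc_last, hkey p] at hab
          have h1 : ((c' p : Fin n) : ℕ) = k := congrArg Fin.val hab
          have h2 := hb p
          exfalso
          omega
        | cast q =>
          rw [hkey p, hkey q] at hab
          exact congrArg Fin.castSucc (hinj hab)
    · intro p hp
      dsimp only at hp ⊢
      induction p using Fin.lastCases with
      | last => exact Fin.snoc_last _ _
      | cast q =>
        rw [hkey q] at hp
        have hval : ((c' q : Fin n) : ℕ) = k := hp
        have := hb q
        exfalso
        omega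
    · show Good true (↑(List.ofFn (fun i : Fin k => labL lam
        (((Fin.snoc c' (⟨k, hkn⟩ : Fin n) : Fin (k+1) → Fin n),
          (Fin.snoc s' true : Fin (k+1) → Bool)))
        ((Fin.last k).succAbove i))) : Multiset ℤ)
      have heq : (fun i : Fin k => labL lam
          (((Fin.snoc c' (⟨k, hkn⟩ : Fin n) : Fin (k+1) → Fin n),
            (Fin.snoc s' true : Fin (k+1) → Bool)))
          ((Fin.last k).succAbove i)) = labL lam ((c', s')) := by
        funext i
        rw [← hlabres lam _ _ i]
        have e1 : (Fin.snoc c' (⟨k, hkn⟩ : Fin n) : Fin (k+1) → Fin n) ∘ Fin.castSucc = c' :=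
          funext hkey
        have e2 : (Fin.snoc s' true : Fin (k+1) → Bool) ∘ Fin.castSucc = s' := funext hkey2
        rw [e1, e2]
      rw [heq]
      exact hG'
    · exact Fin.val_last k
    · show ((Fin.snoc c' (⟨k, hkn⟩ : Fin n) : Fin (k+1) → Fin n) (Fin.last k) : ℕ) = k
      rw [Fin.snoc_last]
  · -- left inverse
    rintro ⟨⟨c, s⟩, j⟩ hx
    simp only [Finset.mem_filter, Finset.mem_univ, true_and] at hx
    obtain ⟨⟨hf, hT, hG⟩, hPf⟩ := hx
    have hlastj : j = Fin.last k := Fin.ext (by simpa using hPf.1)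
    have h5 : ((c (Fin.last k)) : ℕ) = k := by rw [← hlastj]; exact hPf.2
    have hclast : c (Fin.last k) = ⟨k, hkn⟩ := Fin.ext h5
    have hslast : s (Fin.last k) = true := hT (Fin.last k) h5
    refine Prod.ext (Prod.ext ?_ ?_) ?_
    · show (Fin.snoc (c ∘ Fin.castSucc) (⟨k, hkn⟩ : Fin n) : Fin (k+1) → Fin n) = c
      conv_rhs => rw [← Fin.snoc_init_self c]
      rw [hclast]
      rfl
    · show (Fin.snoc (s ∘ Fin.castSucc) true : Fin (k+1) → Bool) = s
      conv_rhs => rw [← Fin.snoc_init_self s]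
      rw [hslast]
      rfl
    · exact hlastj.symm
  · -- right inverse
    rintro ⟨c', s'⟩ hcs
    refine Prod.ext ?_ ?_
    · show (Fin.snoc c' (⟨k, hkn⟩ : Fin n) : Fin (k+1) → Fin n) ∘ Fin.castSucc = c'
      exact funext (fun p => Fin.snoc_castSucc _ _ _)
    · show (Fin.snoc s' true : Fin (k+1) → Bool) ∘ Fin.castSucc = s'
      exact funext (fun p => Fin.snoc_castSucc _ _ _)

include hrange hanti hcomp in
/-- The induction step: the count mod 2 is preserved. -/
lemma Acard_step {k : ℕ} (hkn : k + 1 ≤ n) :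
    ((Acard lam (k+1) : ℕ) : ZMod 2) = ((Acard lam k : ℕ) : ZMod 2) := by
  rw [card_X_eq_Y lam hrange hanti hkn, card_Y_eq_I lam hcomp, card_I_eq_fix lam,
    card_fix_eq_A lam hkn]


include hrange hanti in
lemma Acard_one (hn : 1 ≤ n) : Acard lam 1 = 1 := by
  classical
  rw [Acard, Finset.card_eq_one]
  have hinj : ∀ c : Fin 1 → Fin n, Function.Injective c :=
    fun c a b _ => Subsingleton.elim a b
  set c₀ : Fin 1 → Fin n := fun _ => ⟨0, hn⟩ with hc₀
  set a : ℤ := labL lam ((c₀, fun _ => true)) 0 with ha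
  have ha0 : a ≠ 0 := lab_ne_zero lam hrange (cs := (c₀, fun _ => true)) (hinj c₀) 0
  have hGsingle : ∀ cs : (Fin 1 → Fin n) × (Fin 1 → Bool),
      (Good true (↑(List.ofFn (labL lam cs)) : Multiset ℤ) ↔ 0 < labL lam cs 0) := by
    intro cs
    have hl : List.ofFn (labL lam cs) = [labL lam cs 0] := by
      rw [List.ofFn_succ]
      simp
    rw [hl, good_coe_iff (List.isChain_singleton _)]
    show ((decide (0 < labL lam cs 0) == true) && true) = true ↔ _
    simp
  have hconst : ∀ s : Fin 1 → Bool, s = (fun _ => s 0) :=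
    fun s => funext (fun i => by rw [Subsingleton.elim i (0 : Fin 1)])
  have hlabneg : labL lam ((c₀, fun _ => false)) 0 = -a := by
    have he : (fun _ : Fin 1 => false) = fun p => !((fun _ : Fin 1 => true) p) := by
      funext p
      rfl
    rw [he]
    exact lab_neg lam hanti (hinj c₀) 0
  have hcfix : ∀ c : Fin 1 → Fin n, (∀ i, ((c i) : ℕ) < 1) → c = c₀ := by
    intro c hb
    funext i
    have h1 := hb i
    apply Fin.ext
    have h0 : ((⟨0, hn⟩ : Fin n) : ℕ) = 0 := rfl
    show ((c i) : ℕ) = ((⟨0, hn⟩ : Fin n) : ℕ)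
    omega
  refine ⟨(c₀, fun _ => decide (0 < a)), ?_⟩
  rw [Finset.eq_singleton_iff_unique_mem]
  constructor
  · simp only [Finset.mem_filter, Finset.mem_univ, true_and]
    refine ⟨⟨fun i => Nat.zero_lt_one, hinj c₀⟩, ?_⟩
    rw [hGsingle]
    by_cases hd : 0 < a
    · have he : (fun _ : Fin 1 => decide (0 < a)) = (fun _ : Fin 1 => true) := by
        funext p
        simp [hd]
      rw [he]
      exact hd
    · have hlt : a < 0 := by omega
      have he : (fun _ : Fin 1 => decide (0 < a)) = (fun _ : Fin 1 => false) := by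
        funext p
        simp [hd]
      rw [he, hlabneg]
      omega
  · rintro ⟨c, s⟩ hcs
    simp only [Finset.mem_filter, Finset.mem_univ, true_and] at hcs
    obtain ⟨hf, hG⟩ := hcs
    have hc : c = c₀ := hcfix c hf.1
    subst hc
    rw [hGsingle] at hG
    have hsc := hconst s
    refine Prod.ext rfl ?_
    show s = fun _ => decide (0 < a)
    rw [hsc] at hG ⊢
    rcases Bool.eq_false_or_eq_true (s 0) with hs | hs
    · rw [hs] at hG ⊢
      have hd : decide (0 < a) = true := decide_eq_true (show 0 < a from hG)
      funext p
      rw [hd]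
    · rw [hs] at hG ⊢
      rw [hlabneg] at hG
      have hd : decide (0 < a) = false := decide_eq_false (by omega)
      funext p
      rw [hd]

include hrange in
lemma Acard_n_le (hn : 1 ≤ n) (hA : Acard lam n ≠ 0) : n ≤ m := by
  classical
  obtain ⟨cs, hcs⟩ := Finset.card_pos.mp (Nat.pos_of_ne_zero hA)
  simp only [Finset.mem_filter, Finset.mem_univ, true_and] at hcs
  obtain ⟨hf, hG⟩ := hcs
  obtain ⟨l, hl, hchain, -⟩ := hG
  have hlen : l.length = n := by
    have h1 := congrArg Multiset.card hl
    simpa using h1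
  have hpw : l.Pairwise rAbs := List.isChain_iff_pairwise.mp hchain
  have hmem : ∀ x ∈ l, x ≠ 0 ∧ |x| ≤ (m : ℤ) := by
    intro x hx
    have hx2 : x ∈ (↑(List.ofFn (labL lam cs)) : Multiset ℤ) := by
      rw [← hl]
      exact hx
    obtain ⟨i, rfl⟩ := List.mem_ofFn.mp hx2
    exact ⟨lab_ne_zero lam hrange hf.2 i, lab_abs_le lam hrange hf.2 i⟩
  rcases chain_abs_length l 0 hpw (fun x hx => abs_pos.mpr (hmem x hx).1) (m : ℤ)
      (fun x hx => (hmem x hx).2) with h | h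
  · rw [h] at hlen
    simp at hlen
    omega
  · rw [hlen] at h
    have : (n : ℤ) ≤ (m : ℤ) := by linarith
    exact_mod_cast this


end counting

end OctTucker

/-- Octahedral Tucker lemma: if `λ` maps the nonzero sign vectors of `{-1,0,1}^n` to
`{±1, …, ±m}` antipodally (`λ(-x) = -λ(x)`) and there is no pair `x ⪯ y` with
`λ(x) + λ(y) = 0`, then `n ≤ m`. -/
theorem octahedral_tucker (n m : ℕ) (hn : 1 ≤ n) (hm : 1 ≤ m)
    (lam : (Fin n → ℤ) → ℤ)
    (hrange : ∀ x : Fin n → ℤ, (∀ i, |x i| ≤ 1) → x ≠ 0 →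
      lam x ≠ 0 ∧ |lam x| ≤ (m : ℤ))
    (hanti : ∀ x : Fin n → ℤ, (∀ i, |x i| ≤ 1) → x ≠ 0 → lam (-x) = -lam x)
    (hcomp : ∀ x y : Fin n → ℤ, (∀ i, |x i| ≤ 1) → x ≠ 0 →
      (∀ i, |y i| ≤ 1) → y ≠ 0 → (∀ i, x i ≠ 0 → y i = x i) →
      lam x + lam y ≠ 0) :
    n ≤ m := by
  classical
  have hmod : ∀ k, 1 ≤ k → k ≤ n → ((OctTucker.Acard lam k : ℕ) : ZMod 2) = 1 := by
    intro k
    induction k with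
    | zero => intro h; omega
    | succ k ih =>
      intro hk1 hkn
      by_cases hk0 : k = 0
      · subst hk0
        rw [OctTucker.Acard_one lam hrange hanti hn]
        exact Nat.cast_one
      · have hk1' : 1 ≤ k := by omega
        rw [OctTucker.Acard_step lam hrange hanti hcomp (by omega : k + 1 ≤ n)]
        exact ih hk1' (by omega)
  have h1 := hmod n hn le_rfl
  have hA : OctTucker.Acard lam n ≠ 0 := by
    intro h0
    rw [h0] at h1
    exact absurd h1 (by decide)
  exact OctTucker.Acard_n_le lam hrange hn hA
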